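/- For every real number b, the function F(b) = φ(b)/Φ(−b) − b is differentiable at b with derivative F′(b) = r(b)·F(b) − 1, and this derivative is strictly negative. -/

import Mathlib

open MeasureTheory Filter

/-- Standard normal density. -/
noncomputable def phi (x : ℝ) : ℝ := Real.exp (-x ^ 2 / 2) / Real.sqrt (2 * Real.pi)

/-- Standard normal cumulative distribution function. -/
noncomputable def Phi (x : ℝ) : ℝ := ∫ t in Set.Iio x, phi t

/-- Mills-type ratio. -/
noncomputable def r (b : ℝ) : ℝ := phi b / Phi (-b)

/-- The deficit transformation `F`. -/
noncomputable def F (b : ℝ) : ℝ := phi b / Phi (-b) - b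

lemma sqrt2pi_pos : 0 < Real.sqrt (2 * Real.pi) :=
  Real.sqrt_pos.mpr (by positivity)

lemma phi_pos (x : ℝ) : 0 < phi x := div_pos (Real.exp_pos _) sqrt2pi_pos

lemma continuous_phi : Continuous phi := by
  unfold phi; fun_prop

lemma phi_eq (x : ℝ) : phi x = Real.exp (-(1/2) * x ^ 2) * (Real.sqrt (2 * Real.pi))⁻¹ := by
  rw [phi, div_eq_mul_inv]; ring_nf

lemma phi_neg (x : ℝ) : phi (-x) = phi x := by
  rw [phi, phi]; ring_nf

lemma integrable_phi : Integrable phi := by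
  have h := (integrable_exp_neg_mul_sq (by norm_num : (0:ℝ) < 1/2)).mul_const
    (Real.sqrt (2 * Real.pi))⁻¹
  exact h.congr (Filter.Eventually.of_forall fun x => (phi_eq x).symm)

lemma integrable_id_mul_phi : Integrable (fun x => x * phi x) := by
  have h := ((integrable_mul_exp_neg_mul_sq (by norm_num : (0:ℝ) < 1/2)).mul_const
    (Real.sqrt (2 * Real.pi))⁻¹)
  exact h.congr (Filter.Eventually.of_forall fun x => by simp only [phi_eq]; ring)

lemma integrable_sq_mul_phi : Integrable (fun x => x ^ 2 * phi x) := by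
  have h := (integrable_rpow_mul_exp_neg_mul_sq (by norm_num : (0:ℝ) < 1/2)
    (by norm_num : (-1:ℝ) < 2)).mul_const (Real.sqrt (2 * Real.pi))⁻¹
  refine h.congr (Filter.Eventually.of_forall fun x => ?_)
  simp only [phi_eq, show ((2:ℝ)) = ((2:ℕ):ℝ) by norm_num, Real.rpow_natCast, sq_abs]
  ring

lemma hasDerivAt_phi (x : ℝ) : HasDerivAt phi (-x * phi x) x := by
  have h1 : HasDerivAt (fun y : ℝ => -y ^ 2 / 2) (-x) x := by
    have := ((hasDerivAt_pow 2 x).neg).div_const 2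
    convert this using 1
    · rfl
    · rfl
    · rfl
    push_cast
    ring
  have h2 := (h1.exp).div_const (Real.sqrt (2 * Real.pi))
  convert h2 using 1
  · rfl
  · rfl
  · rfl
  rw [phi]; ring

lemma hasDerivAt_Phi (x : ℝ) : HasDerivAt Phi (phi x) x := by
  have key : ∀ y : ℝ, Phi y = Phi 0 + ∫ t in (0:ℝ)..y, phi t := by
    intro y
    have h := intervalIntegral.integral_Iic_sub_Iic
      (integrable_phi.integrableOn (s := Set.Iic 0))
      (integrable_phi.integrableOn (s := Set.Iic y))
    rw [Phi, Phi, ← MeasureTheory.integral_Iic_eq_integral_Iio,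
      ← MeasureTheory.integral_Iic_eq_integral_Iio]
    linarith [h]
  have hD : HasDerivAt (fun u => ∫ t in (0:ℝ)..u, phi t) (phi x) x :=
    intervalIntegral.integral_hasDerivAt_right
      (integrable_phi.intervalIntegrable)
      (continuous_phi.stronglyMeasurableAtFilter _ _)
      continuous_phi.continuousAt
  exact (hD.const_add (Phi 0)).congr_of_eventuallyEq
    (Filter.Eventually.of_forall fun y => (key y))

lemma Phi_neg_eq (b : ℝ) : Phi (-b) = ∫ t in Set.Ioi b, phi t := by
  rw [Phi, ← MeasureTheory.integral_Iic_eq_integral_Iio, ← integral_comp_neg_Ioi]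
  exact setIntegral_congr_fun measurableSet_Ioi fun t _ => phi_neg t

lemma Phi_neg_pos (b : ℝ) : 0 < Phi (-b) := by
  rw [Phi_neg_eq]
  rw [MeasureTheory.setIntegral_pos_iff_support_of_nonneg_ae
    (Filter.Eventually.of_forall fun x => (phi_pos x).le)
    (integrable_phi.integrableOn)]
  have hsup : Function.support phi = Set.univ := by
    ext x; simp [Function.mem_support, (phi_pos x).ne']
  rw [hsup, Set.univ_inter]
  simp [Real.volume_Ioi]

lemma phi_tendsto_zero : Tendsto phi atTop (nhds 0) := by
  have h : Tendsto (fun x : ℝ => Real.exp (-(1/2) * x ^ 2)) atTop (nhds 0) := by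
    have h2 : Tendsto (fun x : ℝ => -(1/2) * x ^ 2) atTop atBot := by
      apply Tendsto.const_mul_atTop_of_neg (by norm_num : (-(1/2):ℝ) < 0)
      exact tendsto_pow_atTop (by norm_num)
    exact Real.tendsto_exp_atBot.comp h2
  have h3 := h.mul_const (Real.sqrt (2 * Real.pi))⁻¹
  rw [zero_mul] at h3
  exact h3.congr fun x => (phi_eq x).symm

lemma integral_id_mul_phi (b : ℝ) : ∫ t in Set.Ioi b, t * phi t = phi b := by
  have h := MeasureTheory.integral_Ioi_of_hasDerivAt_of_tendsto'
    (f := fun t => -phi t) (f' := fun t => t * phi t) (a := b) (m := 0)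
    (fun x _ => by
      have := (hasDerivAt_phi x).neg
      convert this using 1
      · rfl
      ring)
    (integrable_id_mul_phi.integrableOn)
    (by have := phi_tendsto_zero.neg; rwa [neg_zero] at this)
  simpa using h

lemma id_mul_phi_tendsto_zero : Tendsto (fun x => x * phi x) atTop (nhds 0) := by
  have h : Tendsto (fun x : ℝ => x * Real.exp (-(1/2) * x ^ 2)) atTop (nhds 0) := by
    have hlo := rpow_mul_exp_neg_mul_sq_isLittleO_exp_neg (by norm_num : (0:ℝ) < 1/2) 1
    have hexp : Tendsto (fun x : ℝ => Real.exp (-(1/2) * x)) atTop (nhds 0) :=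
      Real.tendsto_exp_atBot.comp
        (Tendsto.const_mul_atTop_of_neg (by norm_num : (-(1/2):ℝ) < 0) tendsto_id)
    have := hlo.tendsto_zero_of_tendsto hexp
    exact this.congr fun x => by rw [Real.rpow_one]
  have h3 := h.mul_const (Real.sqrt (2 * Real.pi))⁻¹
  rw [zero_mul] at h3
  exact h3.congr fun x => by rw [phi_eq]; ring

lemma integral_sq_mul_phi (b : ℝ) :
    ∫ t in Set.Ioi b, t ^ 2 * phi t = b * phi b + Phi (-b) := by
  have key : ∀ x : ℝ, HasDerivAt (fun t => -(t * phi t)) (x ^ 2 * phi x - phi x) x := by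
    intro x
    have h := ((hasDerivAt_id x).mul (hasDerivAt_phi x)).neg
    convert h using 1
    · rfl
    · rfl
    · rfl
    simp only [id]
    ring
  have hint : IntegrableOn (fun t => t ^ 2 * phi t - phi t) (Set.Ioi b) :=
    (integrable_sq_mul_phi.sub integrable_phi).integrableOn
  have hlim : Tendsto (fun t : ℝ => -(t * phi t)) atTop (nhds 0) := by
    have := id_mul_phi_tendsto_zero.neg
    rwa [neg_zero] at this
  have h := MeasureTheory.integral_Ioi_of_hasDerivAt_of_tendsto'
    (fun x _ => key x) hint hlim
  rw [MeasureTheory.integral_sub integrable_sq_mul_phi.integrableOn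
    integrable_phi.integrableOn, ← Phi_neg_eq] at h
  linarith [h]

lemma key_ineq (b : ℝ) : phi b ^ 2 < Phi (-b) ^ 2 + b * phi b * Phi (-b) := by
  set c := r b with hc
  have hΦ := Phi_neg_pos b
  have hcΦ : c * Phi (-b) = phi b := by
    rw [hc, r]; field_simp
  have h1 : Integrable (fun t : ℝ => t ^ 2 * phi t - 2 * c * (t * phi t)) :=
    integrable_sq_mul_phi.sub (integrable_id_mul_phi.const_mul (2 * c))
  have h2 : Integrable (fun t : ℝ => c ^ 2 * phi t) := integrable_phi.const_mul (c ^ 2)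
  have h12 : Integrable (fun t : ℝ => t ^ 2 * phi t - 2 * c * (t * phi t) + c ^ 2 * phi t) :=
    h1.add h2
  have hInt : Integrable (fun t => (t - c) ^ 2 * phi t) :=
    h12.congr (Filter.Eventually.of_forall fun t => by ring)
  have hpos : 0 < ∫ t in Set.Ioi b, (t - c) ^ 2 * phi t := by
    rw [MeasureTheory.setIntegral_pos_iff_support_of_nonneg_ae
      (Filter.Eventually.of_forall fun x => mul_nonneg (sq_nonneg _) (phi_pos _).le)
      hInt.integrableOn]
    have hsub : Set.Ioi (max b c) ⊆
        Function.support (fun t => (t - c) ^ 2 * phi t) ∩ Set.Ioi b := by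
      intro x hx
      have h1 : c < x := lt_of_le_of_lt (le_max_right _ _) hx
      have h2 : b < x := lt_of_le_of_lt (le_max_left _ _) hx
      refine ⟨?_, h2⟩
      simp only [Function.mem_support]
      have hx0 : (0:ℝ) < x - c := by linarith
      exact (mul_pos (pow_pos hx0 2) (phi_pos x)).ne'
    calc (0:ENNReal) < volume (Set.Ioi (max b c)) := by simp [Real.volume_Ioi]
      _ ≤ _ := measure_mono hsub
  have hval : ∫ t in Set.Ioi b, (t - c) ^ 2 * phi t
      = (b * phi b + Phi (-b)) - 2 * c * phi b + c ^ 2 * Phi (-b) := by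
    have expand : (fun t => (t - c) ^ 2 * phi t)
        = fun t => (t ^ 2 * phi t - (2 * c) * (t * phi t)) + c ^ 2 * phi t :=
      funext fun t => by ring
    rw [expand,
      MeasureTheory.integral_add h1.integrableOn h2.integrableOn,
      MeasureTheory.integral_sub integrable_sq_mul_phi.integrableOn
        ((integrable_id_mul_phi.const_mul (2 * c)).integrableOn),
      integral_const_mul, integral_const_mul,
      integral_id_mul_phi, integral_sq_mul_phi, ← Phi_neg_eq]
  rw [hval] at hpos
  nlinarith [mul_pos hpos hΦ, hcΦ, sq_nonneg (phi b)]

/-- `F` is differentiable at every real `b` with derivative `F′(b) = r(b)·F(b) − 1`,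
and this derivative is strictly negative. -/
theorem F_hasDerivAt_neg (b : ℝ) :
    HasDerivAt F (r b * F b - 1) b ∧ r b * F b - 1 < 0 := by
  have hΦ := Phi_neg_pos b
  constructor
  · have hG : HasDerivAt (fun x : ℝ => Phi (-x)) (-phi b) b := by
      have h := (hasDerivAt_Phi (-b)).comp b (hasDerivAt_neg b)
      convert h using 1
      · rfl
      · rfl
      · rfl
      rw [phi_neg]; ring
    have hq : HasDerivAt (fun x => phi x / Phi (-x))
        ((-b * phi b * Phi (-b) - phi b * (-phi b)) / Phi (-b) ^ 2) b :=
      (hasDerivAt_phi b).div hG hΦ.ne'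
    have hF := hq.sub (hasDerivAt_id b)
    convert hF using 1
    · rfl
    · rfl
    · rfl
    rw [r, F]
    field_simp
    ring
  · have h2 : r b * F b - 1
        = (phi b ^ 2 - (Phi (-b) ^ 2 + b * phi b * Phi (-b))) / Phi (-b) ^ 2 := by
      rw [r, F]
      field_simp
      ring
    rw [h2]
    apply div_neg_of_neg_of_pos
    · linarith [key_ineq b]
    · positivity
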